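/- Let X be a compact metric space of finite upper Minkowski dimension d. Then the upper Minkowski critical parameter of W_2(X) in the power-exponential scale is at most d; in particular, for all t > d, the covering numbers satisfy log N(W_2(X), ε) = O((1/ε)^t) as ε → 0, so crit_P(W_2(X)) ≤ d. -/

import Mathlib

open MeasureTheory ENNReal

/-- `π` is a coupling of `μ` and `ν`. -/
def IsCoupling {X : Type*} [MeasurableSpace X] (μ ν : Measure X)
    (π : Measure (X × X)) : Prop :=
  π.map Prod.fst = μ ∧ π.map Prod.snd = ν

/-- The `L^p` Wasserstein distance between two measures, as the infimal `p`-cost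
over all couplings, to the power `1/p`. -/
noncomputable def Wp {X : Type*} [MetricSpace X] [MeasurableSpace X]
    (p : ℝ) (μ ν : Measure X) : ℝ≥0∞ :=
  (⨅ (π : Measure (X × X)) (_ : IsCoupling μ ν π),
    ∫⁻ z, ENNReal.ofReal (dist z.1 z.2 ^ p) ∂π) ^ (1 / p)

open Filter Topology

/-- The minimal number of balls of radius `ε` needed to cover `A`. -/
noncomputable def coverNum {X : Type*} [MetricSpace X] (A : Set X) (ε : ℝ) : ℕ :=
  sInf {n | ∃ t : Finset X, t.card = n ∧ A ⊆ ⋃ x ∈ t, Metric.ball x ε}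

/-- The minimal number of `W_p`-balls of radius `ε` needed to cover the space of
probability measures on `X`. -/
noncomputable def coverNumW (X : Type*) [MetricSpace X] [MeasurableSpace X]
    (p : ℝ) (ε : ℝ) : ℕ :=
  sInf {n | ∃ T : Finset (ProbabilityMeasure X), T.card = n ∧
    ∀ μ : ProbabilityMeasure X, ∃ ν ∈ T,
      Wp p (μ : Measure X) (ν : Measure X) ≤ ENNReal.ofReal ε}

lemma exists_cover {X : Type*} [MetricSpace X] [CompactSpace X] (ε : ℝ) (hε : 0 < ε) :
    ∃ t : Finset X, t.card = coverNum (Set.univ : Set X) ε ∧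
      (Set.univ : Set X) ⊆ ⋃ x ∈ t, Metric.ball x ε := by
  have h : {n | ∃ t : Finset X, t.card = n ∧
      (Set.univ : Set X) ⊆ ⋃ x ∈ t, Metric.ball x ε}.Nonempty := by
    obtain ⟨t, ht⟩ := isCompact_univ.elim_finite_subcover (fun x : X => Metric.ball x ε)
      (fun x => Metric.isOpen_ball) (fun x _ => Set.mem_iUnion.2 ⟨x, Metric.mem_ball_self hε⟩)
    exact ⟨t.card, t, rfl, ht⟩
  obtain ⟨t, ht1, ht2⟩ := Nat.sInf_mem h
  exact ⟨t, ht1, ht2⟩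

lemma Measure.sum_eq_finset {α : Type*} [MeasurableSpace α] (f : ℕ → Measure α) (n : ℕ)
    (h : ∀ k, n ≤ k → f k = 0) : Measure.sum f = ∑ k ∈ Finset.range n, f k := by
  ext s hs
  rw [Measure.sum_apply _ hs, Measure.finset_sum_apply]
  exact tsum_eq_sum (fun k hk => by rw [h k (by simpa using hk)]; rfl)

lemma key {X : Type*} [MetricSpace X] [CompactSpace X] [MeasurableSpace X] [BorelSpace X]
    [Nonempty X] {ε' : ℝ} (hε' : 0 < ε') {M : ℕ} (hM : 0 < M) :
    ∃ T : Finset (ProbabilityMeasure X),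
      T.card ≤ (M + 1) ^ (coverNum (Set.univ : Set X) ε') ∧
      ∀ μ : ProbabilityMeasure X, ∃ ν ∈ T,
        (⨅ (π : Measure (X × X)) (_ : IsCoupling (μ : Measure X) (ν : Measure X) π),
          ∫⁻ z, ENNReal.ofReal (dist z.1 z.2 ^ (2:ℝ)) ∂π)
          ≤ ENNReal.ofReal (ε' ^ (2:ℝ)) +
            ENNReal.ofReal (Metric.diam (Set.univ : Set X) ^ (2:ℝ)) *
              ((coverNum (Set.univ : Set X) ε' : ℝ≥0∞) / (M : ℝ≥0∞)) := by
  classical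
  obtain ⟨t, htc, htcov⟩ := exists_cover (X := X) ε' hε'
  set n := coverNum (Set.univ : Set X) ε' with hn
  set D := Metric.diam (Set.univ : Set X) with hD
  have hD0 : (0:ℝ) ≤ D := Metric.diam_nonneg
  set x : ℕ → X := fun k => t.toList.getD k (Classical.arbitrary X) with hx
  have hlen : t.toList.length = n := by rw [Finset.length_toList, htc]
  have hcov : (Set.univ : Set X) ⊆ ⋃ k, ⋃ (_ : k < n), Metric.ball (x k) ε' := by
    intro z _
    obtain ⟨y, hy, hz⟩ := Set.mem_iUnion₂.1 (htcov (Set.mem_univ z))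
    rw [← Finset.mem_toList] at hy
    obtain ⟨i, hi, hyi⟩ := List.mem_iff_getElem.1 hy
    refine Set.mem_iUnion₂.2 ⟨i, by omega, ?_⟩
    have : x i = y := by rw [hx]; simp only []; rw [List.getD_eq_getElem _ _ hi, hyi]
    rwa [this]
  have hn1 : 0 < n := by
    by_contra h
    have hz := hcov (Set.mem_univ (Classical.arbitrary X))
    simp only [Set.mem_iUnion] at hz
    obtain ⟨k, hk, -⟩ := hz
    omega
  set f : ℕ → Set X := fun k => if k < n then Metric.ball (x k) ε' else ∅ with hf
  set A : ℕ → Set X := disjointed f with hA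
  have hAm : ∀ k, MeasurableSet (A k) :=
    MeasurableSet.disjointed (fun k => by
      by_cases h : k < n <;> simp [hf, h, Metric.isOpen_ball.measurableSet])
  have hAd : Pairwise (Function.onFun Disjoint A) := disjoint_disjointed f
  have hAsub : ∀ k, A k ⊆ f k := disjointed_subset f
  have hAball : ∀ k, k < n → A k ⊆ Metric.ball (x k) ε' := fun k hk =>
    (hAsub k).trans (by rw [hf]; simp [hk])
  have hAempty : ∀ k, n ≤ k → A k = ∅ := fun k hk =>
    Set.subset_empty_iff.1 ((hAsub k).trans (by rw [hf]; simp [Nat.not_lt.2 hk]))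
  have hAuniv : (⋃ k, A k) = Set.univ := by
    rw [hA, iUnion_disjointed]
    refine Set.eq_univ_of_univ_subset (fun z hz => ?_)
    obtain ⟨k, hk, hzk⟩ := Set.mem_iUnion₂.1 (hcov hz)
    exact Set.mem_iUnion.2 ⟨k, by rw [hf]; simp [hk]; exact hzk⟩
  have hdistD : ∀ z y : X, dist z y ≤ D :=
    fun z y => Metric.dist_le_diam_of_mem isCompact_univ.isBounded trivial trivial
  have hMne : (M : ℝ≥0∞) ≠ 0 := by simpa using hM.ne'
  have hMnt : (M : ℝ≥0∞) ≠ ⊤ := natCast_ne_top M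
  -- the finite net
  set F : (Fin n → Fin (M+1)) → ProbabilityMeasure X := fun g =>
    if h : ∑ i, ((g i : ℕ) : ℝ≥0∞) = (M : ℝ≥0∞) then
      ⟨∑ i : Fin n, (((g i : ℕ) : ℝ≥0∞) / M) • Measure.dirac (x i), by
        constructor
        rw [Measure.finset_sum_apply]
        simp only [Measure.smul_apply, Measure.dirac_apply_of_mem (Set.mem_univ _),
          smul_eq_mul, mul_one]
        simp only [div_eq_mul_inv, ← Finset.sum_mul]
        rw [h, ← div_eq_mul_inv, ENNReal.div_self hMne hMnt]⟩
    else ⟨Measure.dirac (x 0), inferInstance⟩ with hF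
  refine ⟨Finset.univ.image F, le_trans Finset.card_image_le (by simp [Fintype.card_fun]), ?_⟩
  intro μ
  -- mass vector and its quantization
  set p : ℕ → ℝ≥0∞ := fun k => (μ : Measure X) (A k) with hp
  have hpt : ∀ k, p k ≤ 1 := fun k => prob_le_one
  have hpnt : ∀ k, p k ≠ ⊤ := fun k => ((hpt k).trans_lt one_lt_top).ne
  have hp1 : ∑ k ∈ Finset.range n, p k = 1 := by
    have h2 : ∑' k, p k = 1 := by
      rw [hp]; rw [← measure_iUnion hAd hAm, hAuniv]; exact measure_univ
    rw [← h2]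
    exact (tsum_eq_sum (fun k hk => by
      rw [hp]; simp [hAempty k (by simpa using hk)])).symm
  have hpzero : ∀ k, n ≤ k → p k = 0 := fun k hk => by
    rw [hp]; simp [hAempty k hk]
  set m : ℕ → ℕ := fun k => if k = 0 then
      M - ∑ j ∈ (Finset.range n).erase 0, ⌊(M:ℝ) * (p j).toReal⌋₊
    else ⌊(M:ℝ) * (p k).toReal⌋₊ with hm
  have hfloor_le : ∀ k, ⌊(M:ℝ) * (p k).toReal⌋₊ ≤ M := by
    intro k
    have hto1 : (p k).toReal ≤ 1 := by
      simpa using ENNReal.toReal_mono one_ne_top (hpt k)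
    have : (M:ℝ) * (p k).toReal ≤ (M:ℝ) := by
      nlinarith [ENNReal.toReal_nonneg (a := p k), (Nat.cast_pos (α := ℝ)).2 hM]
    calc ⌊(M:ℝ) * (p k).toReal⌋₊ ≤ ⌊(M:ℝ)⌋₊ := Nat.floor_le_floor this
    _ = M := Nat.floor_natCast M
  have hsum_toReal : ∑ j ∈ (Finset.range n).erase 0, (p j).toReal ≤ 1 := by
    rw [← ENNReal.toReal_sum (fun a _ => hpnt a)]
    have h2 : ∑ j ∈ (Finset.range n).erase 0, p j ≤ 1 :=
      hp1 ▸ Finset.sum_le_sum_of_subset (Finset.erase_subset _ _)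
    calc (∑ j ∈ (Finset.range n).erase 0, p j).toReal ≤ (1:ℝ≥0∞).toReal :=
          ENNReal.toReal_mono one_ne_top h2
      _ = 1 := by simp
  have hRM : ∑ j ∈ (Finset.range n).erase 0, ⌊(M:ℝ) * (p j).toReal⌋₊ ≤ M := by
    have hcast : ((∑ j ∈ (Finset.range n).erase 0, ⌊(M:ℝ) * (p j).toReal⌋₊ : ℕ) : ℝ) ≤ M := by
      push_cast
      calc ∑ j ∈ (Finset.range n).erase 0, (⌊(M:ℝ) * (p j).toReal⌋₊ : ℝ)
          ≤ ∑ j ∈ (Finset.range n).erase 0, (M:ℝ) * (p j).toReal :=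
            Finset.sum_le_sum (fun j _ => Nat.floor_le (by positivity))
        _ = (M:ℝ) * ∑ j ∈ (Finset.range n).erase 0, (p j).toReal := by
            rw [Finset.mul_sum]
        _ ≤ (M:ℝ) * 1 := mul_le_mul_of_nonneg_left hsum_toReal (by positivity)
        _ = M := mul_one _
    exact_mod_cast hcast
  have hmle : ∀ k, m k ≤ M := by
    intro k
    rw [hm]
    by_cases h : k = 0
    · simp [h]
    · simp only [h, if_false]; exact hfloor_le k
  have hmsum : ∑ k ∈ Finset.range n, m k = M := by
    rw [← Finset.add_sum_erase _ m (Finset.mem_range.2 hn1)]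
    have he : ∑ j ∈ (Finset.range n).erase 0, m j
        = ∑ j ∈ (Finset.range n).erase 0, ⌊(M:ℝ) * (p j).toReal⌋₊ :=
      Finset.sum_congr rfl (fun j hj => by
        rw [hm]; simp [(Finset.mem_erase.1 hj).1])
    rw [he, hm]; simp only [if_pos rfl]
    exact Nat.sub_add_cancel hRM
  set q : ℕ → ℝ≥0∞ := fun k => (m k : ℝ≥0∞) / M with hq
  have hqnt : ∀ k, q k ≠ ⊤ := fun k => by
    rw [hq]; exact (ENNReal.div_lt_top (natCast_ne_top _) hMne).ne
  have hqsum : ∑ k ∈ Finset.range n, q k = 1 := by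
    rw [hq]; simp only []
    simp only [div_eq_mul_inv, ← Finset.sum_mul]
    rw [← Nat.cast_sum, hmsum, ← div_eq_mul_inv, ENNReal.div_self hMne hMnt]
  have hfloorENN : ∀ k, ((⌊(M:ℝ) * (p k).toReal⌋₊ : ℕ) : ℝ≥0∞) ≤ (M : ℝ≥0∞) * p k := by
    intro k
    rw [← ENNReal.ofReal_natCast]
    calc ENNReal.ofReal ((⌊(M:ℝ) * (p k).toReal⌋₊ : ℕ) : ℝ)
        ≤ ENNReal.ofReal ((M:ℝ) * (p k).toReal) :=
          ENNReal.ofReal_le_ofReal (Nat.floor_le (by positivity))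
      _ = (M : ℝ≥0∞) * p k := by
          rw [ENNReal.ofReal_mul (by positivity), ENNReal.ofReal_natCast,
            ENNReal.ofReal_toReal (hpnt k)]
  have hqlep : ∀ k, k ≠ 0 → q k ≤ p k := by
    intro k hk
    rw [hq]; simp only [hm, if_neg hk]
    calc ((⌊(M:ℝ) * (p k).toReal⌋₊ : ℕ) : ℝ≥0∞) / M ≤ ((M : ℝ≥0∞) * p k) / M :=
          ENNReal.div_le_div_right (hfloorENN k) _
      _ = p k := by rw [mul_comm, mul_div_assoc, ENNReal.div_self hMne hMnt, mul_one]
  have hplt : ∀ k, k ≠ 0 → p k ≤ q k + 1 / M := by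
    intro k hk
    have hMpos : (0:ℝ) < M := by exact_mod_cast hM
    have hreal : (p k).toReal ≤ ((⌊(M:ℝ) * (p k).toReal⌋₊ : ℝ) + 1) / M := by
      rw [le_div_iff₀ hMpos]
      have := Nat.lt_floor_add_one ((M:ℝ) * (p k).toReal)
      linarith
    have h1 : p k ≤ ENNReal.ofReal (((⌊(M:ℝ) * (p k).toReal⌋₊ : ℝ) + 1) / M) := by
      conv_lhs => rw [← ENNReal.ofReal_toReal (hpnt k)]
      exact ENNReal.ofReal_le_ofReal hreal
    rw [hq]; simp only [hm, if_neg hk]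
    refine h1.trans (le_of_eq ?_)
    rw [ENNReal.ofReal_div_of_pos hMpos, ENNReal.ofReal_add (by positivity) zero_le_one,
      ENNReal.ofReal_natCast, ENNReal.ofReal_one, ENNReal.ofReal_natCast,
      ENNReal.div_add_div_same]
  -- the approximating measure ν
  set g : Fin n → Fin (M+1) := fun i => ⟨m i, Nat.lt_succ_of_le (hmle i)⟩ with hg
  have hgsum : ∑ i, ((g i : ℕ) : ℝ≥0∞) = (M : ℝ≥0∞) := by
    rw [hg]; simp only []
    rw [← Nat.cast_sum]
    norm_cast
    rw [Fin.sum_univ_eq_sum_range]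
    exact hmsum
  set ν : ProbabilityMeasure X := F g with hν
  have hνm : (ν : Measure X) = ∑ k ∈ Finset.range n, q k • Measure.dirac (x k) := by
    rw [hν, hF]; simp only [dif_pos hgsum]
    rw [hq]; simp only []
    rw [← Fin.sum_univ_eq_sum_range (fun k => ((m k : ℝ≥0∞) / M) • Measure.dirac (x k))]
    exact (congrArg Subtype.val (dif_pos hgsum)).trans rfl
  refine ⟨ν, Finset.mem_image_of_mem F (Finset.mem_univ g), ?_⟩
  -- the coupling
  set ρ : ℕ → Measure X := fun k =>
    if k = 0 ∨ p k = 0 then Measure.dirac (x 0)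
    else (q k / p k) • Measure.dirac (x k) + ((p k - q k) / p k) • Measure.dirac (x 0) with hρ
  have hρprob : ∀ k, IsProbabilityMeasure (ρ k) := by
    intro k
    rw [hρ]
    by_cases h : k = 0 ∨ p k = 0
    · simp only [if_pos h]; infer_instance
    · push_neg at h
      simp only [if_neg (not_or.2 ⟨h.1, h.2⟩)]
      constructor
      simp only [Measure.add_apply, Measure.smul_apply,
        Measure.dirac_apply_of_mem (Set.mem_univ _), smul_eq_mul, mul_one]
      rw [ENNReal.div_add_div_same, add_tsub_cancel_of_le (hqlep k h.1),
        ENNReal.div_self h.2 (hpnt k)]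
  set π : Measure (X × X) :=
    Measure.sum (fun k => ((μ : Measure X).restrict (A k)).prod (ρ k)) with hπ
  have hcoupling : IsCoupling (μ : Measure X) (ν : Measure X) π := by
    constructor
    · rw [hπ, Measure.map_sum measurable_fst.aemeasurable]
      have h1 : ∀ k, (((μ : Measure X).restrict (A k)).prod (ρ k)).map Prod.fst
          = (μ : Measure X).restrict (A k) := by
        intro k
        haveI := hρprob k
        rw [Measure.map_fst_prod, measure_univ, one_smul]
      simp_rw [h1]
      rw [← Measure.restrict_iUnion hAd hAm, hAuniv, Measure.restrict_univ]
    · rw [hπ, Measure.map_sum measurable_snd.aemeasurable]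
      have h1 : ∀ k, (((μ : Measure X).restrict (A k)).prod (ρ k)).map Prod.snd
          = p k • ρ k := by
        intro k
        haveI := hρprob k
        rw [Measure.map_snd_prod, Measure.restrict_apply_univ]
      simp_rw [h1]
      rw [Measure.sum_eq_finset _ n (fun k hk => by rw [hpzero k hk, zero_smul]), hνm,
        ← Finset.add_sum_erase _ (fun k => p k • ρ k) (Finset.mem_range.2 hn1),
        ← Finset.add_sum_erase _ (fun k => q k • Measure.dirac (x k)) (Finset.mem_range.2 hn1)]
      have hterm : ∀ k ∈ (Finset.range n).erase 0,
          p k • ρ k = q k • Measure.dirac (x k) + (p k - q k) • Measure.dirac (x 0) := by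
        intro k hk
        have hk0 : k ≠ 0 := (Finset.mem_erase.1 hk).1
        by_cases hpk : p k = 0
        · have hq0 : q k = 0 := le_antisymm (hpk ▸ hqlep k hk0) (zero_le)
          simp [hpk, hq0]
        · rw [hρ]; simp only [if_neg (not_or.2 ⟨hk0, hpk⟩)]
          rw [smul_add, smul_smul, smul_smul, ENNReal.mul_div_cancel hpk (hpnt k),
            ENNReal.mul_div_cancel hpk (hpnt k)]
      rw [Finset.sum_congr rfl hterm, Finset.sum_add_distrib, ← Finset.sum_smul]
      have hρ0 : ρ 0 = Measure.dirac (x 0) := by rw [hρ]; simp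
      have hSqnt : ∑ k ∈ (Finset.range n).erase 0, q k ≠ ⊤ := by
        refine ne_top_of_le_ne_top one_ne_top ?_
        exact hqsum ▸ Finset.sum_le_sum_of_subset (Finset.erase_subset _ _)
      have hSqSp : ∑ k ∈ (Finset.range n).erase 0, q k
          ≤ ∑ k ∈ (Finset.range n).erase 0, p k :=
        Finset.sum_le_sum (fun k hk => hqlep k (Finset.mem_erase.1 hk).1)
      have hsub : ∑ k ∈ (Finset.range n).erase 0, (p k - q k)
          = (∑ k ∈ (Finset.range n).erase 0, p k)
            - ∑ k ∈ (Finset.range n).erase 0, q k := by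
        refine ENNReal.eq_sub_of_add_eq hSqnt ?_
        rw [← Finset.sum_add_distrib]
        exact Finset.sum_congr rfl
          (fun k hk => tsub_add_cancel_of_le (hqlep k (Finset.mem_erase.1 hk).1))
      have hp0Sp : p 0 + ∑ k ∈ (Finset.range n).erase 0, p k = 1 := by
        rw [Finset.add_sum_erase _ p (Finset.mem_range.2 hn1)]; exact hp1
      have hq0Sq : q 0 + ∑ k ∈ (Finset.range n).erase 0, q k = 1 := by
        rw [Finset.add_sum_erase _ q (Finset.mem_range.2 hn1)]; exact hqsum
      have hcoeff : p 0 + ∑ k ∈ (Finset.range n).erase 0, (p k - q k) = q 0 := by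
        refine (ENNReal.add_left_inj hSqnt).1 ?_
        rw [add_assoc, hsub, tsub_add_cancel_of_le hSqSp, hp0Sp, hq0Sq]
      rw [hρ0, ← hcoeff, add_smul]
      abel
  have hgm : Measurable fun z : X × X => ENNReal.ofReal (dist z.1 z.2 ^ (2:ℝ)) := by
    have hc : Continuous fun z : X × X => dist z.1 z.2 ^ (2:ℝ) :=
      continuous_dist.rpow_const (fun z => Or.inr (by norm_num))
    exact ENNReal.measurable_ofReal.comp hc.measurable
  have hgm1 : ∀ z : X, Measurable fun y : X => ENNReal.ofReal (dist z y ^ (2:ℝ)) := fun z =>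
    ENNReal.measurable_ofReal.comp
      (((continuous_const.dist continuous_id).rpow_const
        (fun _ => Or.inr (by norm_num))).measurable)
  have hq0ge : p 0 ≤ q 0 := by
    have hSqnt : ∑ k ∈ (Finset.range n).erase 0, q k ≠ ⊤ := by
      refine ne_top_of_le_ne_top one_ne_top ?_
      exact hqsum ▸ Finset.sum_le_sum_of_subset (Finset.erase_subset _ _)
    have hSqSp : ∑ k ∈ (Finset.range n).erase 0, q k
        ≤ ∑ k ∈ (Finset.range n).erase 0, p k :=
      Finset.sum_le_sum (fun k hk => hqlep k (Finset.mem_erase.1 hk).1)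
    have hp0Sp : p 0 + ∑ k ∈ (Finset.range n).erase 0, p k = 1 := by
      rw [Finset.add_sum_erase _ p (Finset.mem_range.2 hn1)]; exact hp1
    have hq0Sq : q 0 + ∑ k ∈ (Finset.range n).erase 0, q k = 1 := by
      rw [Finset.add_sum_erase _ q (Finset.mem_range.2 hn1)]; exact hqsum
    have hSpnt : ∑ k ∈ (Finset.range n).erase 0, p k ≠ ⊤ := by
      refine ne_top_of_le_ne_top one_ne_top ?_
      exact hp1 ▸ Finset.sum_le_sum_of_subset (Finset.erase_subset _ _)
    rw [ENNReal.eq_sub_of_add_eq hSqnt hq0Sq, ENNReal.eq_sub_of_add_eq hSpnt hp0Sp]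
    exact tsub_le_tsub_left hSqSp 1
  have hcost : ∫⁻ z, ENNReal.ofReal (dist z.1 z.2 ^ (2:ℝ)) ∂π
      ≤ ENNReal.ofReal (ε' ^ (2:ℝ)) + ENNReal.ofReal (D ^ (2:ℝ)) * ((n : ℝ≥0∞) / M) := by
    rw [hπ, lintegral_sum_measure]
    set B : ℕ → ℝ≥0∞ := fun k =>
      p k * ENNReal.ofReal (ε' ^ (2:ℝ)) + (p k - q k) * ENNReal.ofReal (D ^ (2:ℝ)) with hB
    have hterm : ∀ k, ∫⁻ z, ENNReal.ofReal (dist z.1 z.2 ^ (2:ℝ))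
        ∂(((μ : Measure X).restrict (A k)).prod (ρ k)) ≤ B k := by
      intro k
      by_cases hpk : p k = 0
      · rw [Measure.restrict_eq_zero.2 hpk, Measure.zero_prod, lintegral_zero_measure]
        exact zero_le
      · have hkn : k < n := by
          by_contra h
          exact hpk (hpzero k (Nat.le_of_not_lt h))
        haveI := hρprob k
        rw [lintegral_prod _ hgm.aemeasurable]
        simp only []
        by_cases hk0 : k = 0
        · subst hk0
          have hρ0 : ρ 0 = Measure.dirac (x 0) := by rw [hρ]; simp
          have hinner : ∀ z ∈ A 0,
              ∫⁻ y, ENNReal.ofReal (dist z y ^ (2:ℝ)) ∂(ρ 0)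
              ≤ ENNReal.ofReal (ε' ^ (2:ℝ)) := by
            intro z hz
            rw [hρ0, lintegral_dirac' _ (hgm1 z)]
            refine ENNReal.ofReal_le_ofReal ?_
            have hd : dist z (x 0) ≤ ε' := le_of_lt (hAball 0 hkn hz)
            exact Real.rpow_le_rpow dist_nonneg hd (by norm_num)
          calc ∫⁻ z in A 0, ∫⁻ y, ENNReal.ofReal (dist z y ^ (2:ℝ)) ∂(ρ 0) ∂(μ : Measure X)
              ≤ ∫⁻ _ in A 0, ENNReal.ofReal (ε' ^ (2:ℝ)) ∂(μ : Measure X) :=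
                setLIntegral_mono measurable_const hinner
            _ = ENNReal.ofReal (ε' ^ (2:ℝ)) * p 0 := setLIntegral_const _ _
            _ ≤ B 0 := by rw [hB, mul_comm]; exact le_add_right le_rfl
        · have hρk : ρ k = (q k / p k) • Measure.dirac (x k)
              + ((p k - q k) / p k) • Measure.dirac (x 0) := by
            rw [hρ]; simp only [if_neg (not_or.2 ⟨hk0, hpk⟩)]
          have hinner : ∀ z ∈ A k,
              ∫⁻ y, ENNReal.ofReal (dist z y ^ (2:ℝ)) ∂(ρ k)
              ≤ (q k / p k) * ENNReal.ofReal (ε' ^ (2:ℝ))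
                + ((p k - q k) / p k) * ENNReal.ofReal (D ^ (2:ℝ)) := by
            intro z hz
            rw [hρk, lintegral_add_measure, lintegral_smul_measure, lintegral_smul_measure,
              lintegral_dirac' _ (hgm1 z), lintegral_dirac' _ (hgm1 z)]
            simp only [smul_eq_mul]
            gcongr
            · exact le_of_lt (hAball k hkn hz)
            · exact hdistD z (x 0)
          have ha : q k / p k * p k = q k := by
            rw [mul_comm]; exact ENNReal.mul_div_cancel hpk (hpnt k)
          have hb : (p k - q k) / p k * p k = p k - q k := by
            rw [mul_comm]; exact ENNReal.mul_div_cancel hpk (hpnt k)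
          calc ∫⁻ z in A k, ∫⁻ y, ENNReal.ofReal (dist z y ^ (2:ℝ)) ∂(ρ k) ∂(μ : Measure X)
              ≤ ∫⁻ _ in A k, ((q k / p k) * ENNReal.ofReal (ε' ^ (2:ℝ))
                + ((p k - q k) / p k) * ENNReal.ofReal (D ^ (2:ℝ))) ∂(μ : Measure X) :=
                setLIntegral_mono measurable_const hinner
            _ = ((q k / p k) * ENNReal.ofReal (ε' ^ (2:ℝ))
                + ((p k - q k) / p k) * ENNReal.ofReal (D ^ (2:ℝ))) * p k :=
                setLIntegral_const _ _
            _ = (q k / p k * p k) * ENNReal.ofReal (ε' ^ (2:ℝ))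
                + ((p k - q k) / p k * p k) * ENNReal.ofReal (D ^ (2:ℝ)) := by ring
            _ = q k * ENNReal.ofReal (ε' ^ (2:ℝ))
                + (p k - q k) * ENNReal.ofReal (D ^ (2:ℝ)) := by rw [ha, hb]
            _ ≤ B k := by
                rw [hB]
                exact add_le_add (mul_le_mul_left (hqlep k hk0) _) le_rfl
    have hBzero : ∀ k, n ≤ k → B k = 0 := by
      intro k hk
      rw [hB]
      simp [hpzero k hk, zero_tsub]
    have hsumB : ∑' k, B k ≤ ENNReal.ofReal (ε' ^ (2:ℝ))
        + ENNReal.ofReal (D ^ (2:ℝ)) * ((n : ℝ≥0∞) / M) := by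
      rw [tsum_eq_sum (s := Finset.range n) (fun k hk => hBzero k (by simpa using hk))]
      rw [hB]
      simp only []
      rw [Finset.sum_add_distrib, ← Finset.sum_mul, ← Finset.sum_mul, hp1, one_mul]
      refine add_le_add le_rfl ?_
      · have hSle : ∑ k ∈ Finset.range n, (p k - q k) ≤ (n : ℝ≥0∞) / M := by
          have hbound : ∀ k ∈ Finset.range n, p k - q k ≤ 1 / (M : ℝ≥0∞) := by
            intro k _
            by_cases hk0 : k = 0
            · subst hk0
              rw [tsub_eq_zero_of_le hq0ge]
              exact zero_le
            · exact tsub_le_iff_right.2 (by rw [add_comm]; exact hplt k hk0)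
          calc ∑ k ∈ Finset.range n, (p k - q k)
              ≤ (Finset.range n).card • (1 / (M : ℝ≥0∞)) :=
                Finset.sum_le_card_nsmul _ _ _ hbound
            _ = (n : ℝ≥0∞) / M := by
                rw [Finset.card_range, nsmul_eq_mul, mul_one_div]
        calc (∑ k ∈ Finset.range n, (p k - q k)) * ENNReal.ofReal (D ^ (2:ℝ))
            ≤ ((n : ℝ≥0∞) / M) * ENNReal.ofReal (D ^ (2:ℝ)) := mul_le_mul_left hSle _
          _ = ENNReal.ofReal (D ^ (2:ℝ)) * ((n : ℝ≥0∞) / M) := mul_comm _ _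
    exact le_trans (ENNReal.tsum_le_tsum hterm) hsumB
  exact le_trans (iInf₂_le π hcoupling) hcost

lemma coverNum_pos {X : Type*} [MetricSpace X] [CompactSpace X] [Nonempty X]
    {ε : ℝ} (hε : 0 < ε) : 0 < coverNum (Set.univ : Set X) ε := by
  obtain ⟨t, ht1, ht2⟩ := exists_cover (X := X) ε hε
  rcases Nat.eq_zero_or_pos (coverNum (Set.univ : Set X) ε) with h | h
  · exfalso
    rw [h, Finset.card_eq_zero] at ht1
    subst ht1
    simpa using ht2 (Set.mem_univ (Classical.arbitrary X))
  · exact h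

lemma log_le_rpow_div {z δ : ℝ} (hz : 0 < z) (hδ : 0 < δ) : Real.log z ≤ z ^ δ / δ := by
  have h1 := Real.log_le_sub_one_of_pos (Real.rpow_pos_of_pos hz δ)
  rw [Real.log_rpow hz] at h1
  rw [le_div_iff₀ hδ]
  nlinarith [Real.rpow_pos_of_pos hz δ]

lemma wasserstein_cover {X : Type*} [MetricSpace X] [CompactSpace X]
    [MeasurableSpace X] [BorelSpace X] [Nonempty X] {ε : ℝ} (hε : 0 < ε) :
    coverNumW X 2 ε ≤
      (coverNum (Set.univ : Set X) (ε/2) *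
          ⌈(4*((Metric.diam (Set.univ : Set X))^2+1))/ε^2⌉₊ + 1)
        ^ (coverNum (Set.univ : Set X) (ε/2)) := by
  set D := Metric.diam (Set.univ : Set X) with hD
  have hD0 : (0:ℝ) ≤ D := Metric.diam_nonneg
  set n := coverNum (Set.univ : Set X) (ε/2) with hn
  set L := ⌈(4*(D^2+1))/ε^2⌉₊ with hL
  have hLpos : 0 < L := Nat.ceil_pos.2 (by positivity)
  have hnpos : 0 < n := coverNum_pos (by positivity)
  have hM : 0 < n * L := Nat.mul_pos hnpos hLpos
  obtain ⟨T, hTcard, hT⟩ := key (X := X) (ε' := ε/2) (by positivity) (M := n * L) hM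
  have hmem : coverNumW X 2 ε ≤ T.card := by
    refine Nat.sInf_le ⟨T, rfl, ?_⟩
    intro μ
    obtain ⟨ν, hνT, hνW⟩ := hT μ
    refine ⟨ν, hνT, ?_⟩
    have hrpow2 : ∀ y : ℝ, y ^ (2:ℝ) = y ^ 2 := fun y => by
      rw [show (2:ℝ) = ((2:ℕ):ℝ) by norm_num, Real.rpow_natCast]
    have hdivL : ((n : ℝ≥0∞) / ((n * L : ℕ) : ℝ≥0∞)) = 1 / (L : ℝ≥0∞) := by
      calc (n : ℝ≥0∞) / ((n * L : ℕ) : ℝ≥0∞)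
          = ((n : ℝ≥0∞) * 1) / ((n : ℝ≥0∞) * (L : ℝ≥0∞)) := by rw [mul_one, Nat.cast_mul]
        _ = 1 / (L : ℝ≥0∞) :=
            ENNReal.mul_div_mul_left _ _ (by exact_mod_cast hnpos.ne') (natCast_ne_top n)
    have hbound : ENNReal.ofReal ((ε/2) ^ (2:ℝ)) +
        ENNReal.ofReal (D ^ (2:ℝ)) * ((n : ℝ≥0∞) / ((n * L : ℕ) : ℝ≥0∞))
        ≤ ENNReal.ofReal (ε ^ 2) := by
      rw [hdivL]
      have hLr : (1 : ℝ≥0∞) / (L : ℝ≥0∞) = ENNReal.ofReal (1 / (L:ℝ)) := by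
        rw [← ENNReal.ofReal_natCast L, ← ENNReal.ofReal_one,
          ← ENNReal.ofReal_div_of_pos (by exact_mod_cast hLpos)]
      rw [hLr, ← ENNReal.ofReal_mul (by positivity), ← ENNReal.ofReal_add (by positivity)
        (by positivity)]
      refine ENNReal.ofReal_le_ofReal ?_
      simp only [hrpow2]
      have hLge : (4*(D^2+1))/ε^2 ≤ (L:ℝ) := Nat.le_ceil _
      have hLpos' : (0:ℝ) < L := by exact_mod_cast hLpos
      have hε2 : (0:ℝ) < ε^2 := by positivity
      have h4 : 4*(D^2+1) ≤ (L:ℝ) * ε^2 := by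
        rw [div_le_iff₀ hε2] at hLge; linarith
      have key1 : D^2 * (1/(L:ℝ)) ≤ ε^2/4 := by
        rw [mul_one_div, div_le_div_iff₀ hLpos' (by norm_num)]
        nlinarith
      nlinarith
    have hWp : Wp 2 (μ : Measure X) (ν : Measure X) =
        (⨅ (π : Measure (X × X)) (_ : IsCoupling (μ : Measure X) (ν : Measure X) π),
          ∫⁻ z, ENNReal.ofReal (dist z.1 z.2 ^ (2:ℝ)) ∂π) ^ (1/(2:ℝ)) := rfl
    rw [hWp]
    calc (⨅ (π : Measure (X × X)) (_ : IsCoupling (μ : Measure X) (ν : Measure X) π),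
          ∫⁻ z, ENNReal.ofReal (dist z.1 z.2 ^ (2:ℝ)) ∂π) ^ (1/(2:ℝ))
        ≤ (ENNReal.ofReal (ε ^ 2)) ^ (1/(2:ℝ)) :=
          ENNReal.rpow_le_rpow (hνW.trans hbound) (by norm_num)
      _ = ENNReal.ofReal ε := by
          rw [ENNReal.ofReal_pow hε.le 2, ← ENNReal.rpow_natCast (ENNReal.ofReal ε) 2,
            ← ENNReal.rpow_mul]
          norm_num
  exact hmem.trans hTcard

lemma tendsto_half : Filter.Tendsto (fun ε : ℝ => ε/2) (𝓝[>] 0) (𝓝[>] 0) := by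
  rw [tendsto_nhdsWithin_iff]
  constructor
  · have h : Filter.Tendsto (fun ε : ℝ => ε/2) (𝓝 0) (𝓝 (0/2)) :=
      (continuous_id.div_const 2).tendsto 0
    simpa using h.mono_left nhdsWithin_le_nhds
  · filter_upwards [self_mem_nhdsWithin] with ε hε
    exact Set.mem_Ioi.2 (by simpa using div_pos (Set.mem_Ioi.1 hε) two_pos)

lemma eventually_le_one : ∀ᶠ ε in 𝓝[>] (0:ℝ), ε ≤ 1 := by
  filter_upwards [Ioc_mem_nhdsGT_of_mem (Set.mem_Ico.2 ⟨le_refl (0:ℝ), zero_lt_one⟩)] with ε hε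
  exact hε.2

lemma eventually_rpow_small (C a : ℝ) (ha : 0 < a) :
    ∀ᶠ ε in 𝓝[>] (0:ℝ), C * ε ^ a ≤ 1 := by
  have hcont : Filter.Tendsto (fun ε : ℝ => C * ε ^ a) (𝓝[>] 0) (𝓝 0) := by
    have h1 : ContinuousAt (fun x : ℝ => x ^ a) 0 :=
      Real.continuousAt_rpow_const 0 a (Or.inr ha.le)
    have h2 : Filter.Tendsto (fun ε : ℝ => ε ^ a) (𝓝 0) (𝓝 0) := by
      simpa [Real.zero_rpow ha.ne'] using h1.tendsto
    have := (h2.const_mul C).mono_left (nhdsWithin_le_nhds (s := Set.Ioi (0:ℝ)))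
    simpa using this
  filter_upwards [hcont.eventually (ge_mem_nhds (by norm_num : (0:ℝ) < 1))] with ε hε
  exact hε

lemma chain {N n L : ℕ} {u K d' δ : ℝ}
    (hd'0 : 0 ≤ d') (hδ : 0 < δ) (hK1 : 1 ≤ K) (hu1 : 1 ≤ u)
    (hn1 : (1:ℝ) ≤ (n:ℝ)) (hNb : (n:ℝ) ≤ (2*u)^d') (hLK : (L:ℝ) ≤ K * u^2)
    (hcov : N ≤ (n*L + 1)^n) :
    Real.log N ≤ (2 ^ (d'*(1+δ)) * (2*K) ^ δ / δ) * u ^ (d'*(1+δ) + 2*δ) := by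
  have hu0 : (0:ℝ) < u := lt_of_lt_of_le one_pos hu1
  have h2u : (0:ℝ) < 2*u := by linarith
  have h2u1 : (1:ℝ) ≤ (2*u)^d' := by
    have h := Real.rpow_le_rpow_of_exponent_le (by linarith : (1:ℝ) ≤ 2*u) hd'0
    rwa [Real.rpow_zero] at h
  have hu2 : (1:ℝ) ≤ u^2 := by nlinarith
  have hKu : (1:ℝ) ≤ K*u^2 := by nlinarith
  have hn0 : (0:ℝ) ≤ (n:ℝ) := by linarith
  have hMb : ((n:ℝ)*(L:ℝ) + 1) ≤ 2*K*(2*u)^d'*u^2 := by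
    have hstep1 : (n:ℝ) * L ≤ (n:ℝ) * (K * u^2) := mul_le_mul_of_nonneg_left hLK hn0
    have hstep2 : (n:ℝ) * (K * u^2) ≤ (2*u)^d' * (K * u^2) :=
      mul_le_mul_of_nonneg_right hNb (by positivity)
    have hstep3 : (1:ℝ) ≤ (2*u)^d' * (K * u^2) := by nlinarith
    nlinarith
  have hMpos : (0:ℝ) < (n:ℝ)*(L:ℝ)+1 := by positivity
  have hlogN : Real.log N ≤ (n:ℝ) * Real.log ((n:ℝ)*(L:ℝ)+1) := by
    have hlogpos : 0 ≤ Real.log ((n:ℝ)*(L:ℝ) + 1) := Real.log_nonneg (by nlinarith)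
    rcases Nat.eq_zero_or_pos N with h0 | hpos
    · rw [h0]
      simp only [Nat.cast_zero, Real.log_zero]
      positivity
    · have hle : (N:ℝ) ≤ ((n:ℝ)*(L:ℝ) + 1) ^ n := by
        calc (N:ℝ) ≤ (((n*L + 1) ^ n : ℕ):ℝ) := by exact_mod_cast hcov
          _ = ((n:ℝ)*(L:ℝ) + 1) ^ n := by push_cast; ring
      calc Real.log N ≤ Real.log (((n:ℝ)*(L:ℝ) + 1) ^ n) :=
            Real.log_le_log (by exact_mod_cast hpos) hle
        _ = (n:ℝ) * Real.log ((n:ℝ)*(L:ℝ) + 1) := by rw [Real.log_pow]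
  have hB : Real.log ((n:ℝ)*(L:ℝ) + 1) ≤ (2*K*(2*u)^d'*u^2) ^ δ / δ :=
    (log_le_rpow_div hMpos hδ).trans
      ((div_le_div_iff_of_pos_right hδ).2 (Real.rpow_le_rpow (by positivity) hMb hδ.le))
  have hmain : Real.log N ≤ (2*u)^d' * ((2*K*(2*u)^d'*u^2) ^ δ / δ) := by
    calc Real.log N ≤ (n:ℝ) * ((2*K*(2*u)^d'*u^2) ^ δ / δ) :=
          hlogN.trans (mul_le_mul_of_nonneg_left hB hn0)
      _ ≤ (2*u)^d' * ((2*K*(2*u)^d'*u^2) ^ δ / δ) :=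
          mul_le_mul_of_nonneg_right hNb (by positivity)
  refine hmain.trans (le_of_eq ?_)
  have e_inner : ((2*u)^d' * u^2) ^ δ = (2*u)^(d'*δ) * u^((2:ℝ)*δ) := by
    rw [Real.mul_rpow (by positivity) (by positivity), ← Real.rpow_natCast u 2,
      ← Real.rpow_mul h2u.le, ← Real.rpow_mul hu0.le]
    norm_num
  have e2 : (2*K*(2*u)^d'*u^2) ^ δ = (2*K)^δ * ((2*u)^(d'*δ) * u^((2:ℝ)*δ)) := by
    rw [show 2*K*(2*u)^d'*u^2 = (2*K) * ((2*u)^d' * u^2) by ring,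
      Real.mul_rpow (by positivity) (by positivity), e_inner]
  have e3 : (2*u)^d' * (2*u)^(d'*δ) = (2*u)^(d'*(1+δ)) := by
    rw [← Real.rpow_add h2u, show d' + d'*δ = d'*(1+δ) by ring]
  have e4 : (2*u)^(d'*(1+δ)) = 2^(d'*(1+δ)) * u^(d'*(1+δ)) :=
    Real.mul_rpow (by norm_num) hu0.le
  have e5 : u^(d'*(1+δ)) * u^((2:ℝ)*δ) = u^(d'*(1+δ)+2*δ) := by
    rw [← Real.rpow_add hu0]
  calc (2*u)^d' * ((2*K*(2*u)^d'*u^2) ^ δ / δ)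
      = ((2*u)^d' * (2*u)^(d'*δ)) * (2*K)^δ * u^((2:ℝ)*δ) / δ := by rw [e2]; ring
    _ = (2*u)^(d'*(1+δ)) * (2*K)^δ * u^((2:ℝ)*δ) / δ := by rw [e3]
    _ = 2^(d'*(1+δ)) * (u^(d'*(1+δ)) * u^((2:ℝ)*δ)) * (2*K)^δ / δ := by rw [e4]; ring
    _ = 2^(d'*(1+δ)) * u^(d'*(1+δ)+2*δ) * (2*K)^δ / δ := by rw [e5]
    _ = (2 ^ (d'*(1+δ)) * (2*K) ^ δ / δ) * u ^ (d'*(1+δ) + 2*δ) := by ring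

lemma const_rpow_le {C₀ u t' t ε : ℝ} (hC₀ : 0 < C₀) (hε : 0 < ε) (hu : u = 1/ε)
    (ht' : t' ≤ t) (h3 : C₀ * ε^(t - t') ≤ 1) : C₀ * u^t' ≤ u^t := by
  have hu0 : 0 < u := by rw [hu]; positivity
  have hεr : (0:ℝ) < ε ^ (t - t') := Real.rpow_pos_of_pos hε _
  have hC : C₀ ≤ u^(t - t') := by
    have hueq : u^(t - t') = (ε^(t - t'))⁻¹ := by
      rw [hu, one_div, Real.inv_rpow hε.le]
    rw [hueq, ← one_div, le_div_iff₀ hεr]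
    linarith
  calc C₀ * u^t' ≤ u^(t - t') * u^t' :=
        mul_le_mul_of_nonneg_right hC (Real.rpow_pos_of_pos hu0 _).le
    _ = u^t := by rw [← Real.rpow_add hu0]; ring_nf

/-- if `X` is a compact metric space of upper Minkowski dimension at
most `d`, then `log N(W₂(X), ε) = O((1/ε)^t)` for every `t > d`, and hence the
upper Minkowski critical parameter (so also the critical parameter) of `W₂(X)` in
the power-exponential scale is at most `d`. -/
theorem stmt17 {X : Type*} [MetricSpace X] [CompactSpace X]
    [MeasurableSpace X] [BorelSpace X] (d : ℝ) (hd : 0 ≤ d)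
    (hdim : ∀ d' : ℝ, d < d' → ∀ᶠ ε in 𝓝[>] (0:ℝ),
      (coverNum (Set.univ : Set X) ε : ℝ) ≤ (1 / ε) ^ d') :
    (∀ t : ℝ, d < t → ∃ C : ℝ, 0 < C ∧ ∀ᶠ ε in 𝓝[>] (0:ℝ),
      Real.log (coverNumW X 2 ε) ≤ C * (1 / ε) ^ t) ∧
    sInf {s : ℝ | 0 < s ∧
        Filter.liminf (fun ε : ℝ =>
            (coverNumW X 2 ε : ℝ≥0∞) * ENNReal.ofReal (Real.exp (-(1 / ε) ^ s)))
          (𝓝[>] (0:ℝ)) < ⊤} ≤ d := by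
  have part1 : ∀ t : ℝ, d < t → ∃ C : ℝ, 0 < C ∧ ∀ᶠ ε in 𝓝[>] (0:ℝ),
      Real.log (coverNumW X 2 ε) ≤ C * (1 / ε) ^ t := by
    intro t ht
    by_cases hX : Nonempty X
    · set D := Metric.diam (Set.univ : Set X) with hD
      have hD0 : (0:ℝ) ≤ D := Metric.diam_nonneg
      set d' := (d + t)/2 with hd'def
      have hd'1 : d < d' := by rw [hd'def]; linarith
      have hd't : d' < t := by rw [hd'def]; linarith
      have hd'0 : 0 ≤ d' := by linarith
      set δ := (t - d')/(d' + 3) with hδdef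
      have hδ : 0 < δ := div_pos (by linarith) (by linarith)
      set K := 4*(D^2+1)+1 with hK
      have hK1 : (1:ℝ) ≤ K := by nlinarith
      set C₀ := 2 ^ (d'*(1+δ)) * (2*K) ^ δ / δ with hC₀
      set t' := d'*(1+δ) + 2*δ with ht'def
      have ht't : t' < t := by
        have h1 : δ * (d' + 3) = t - d' := by
          rw [hδdef]; field_simp
        have h2 : t' = d' + (d'+2)*δ := by rw [ht'def]; ring
        nlinarith
      refine ⟨1, one_pos, ?_⟩
      filter_upwards [self_mem_nhdsWithin, tendsto_half.eventually (hdim d' hd'1),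
        eventually_le_one, eventually_rpow_small C₀ (t - t') (by linarith)]
        with ε hε h1 h2 h3
      have hε0 : (0:ℝ) < ε := Set.mem_Ioi.1 hε
      rw [one_mul]
      have hu1 : (1:ℝ) ≤ 1/ε := one_le_one_div hε0 h2
      have hu0 : (0:ℝ) < 1/ε := by positivity
      have hnpos : 0 < coverNum (Set.univ : Set X) (ε/2) := coverNum_pos (by positivity)
      have hn1 : (1:ℝ) ≤ (coverNum (Set.univ : Set X) (ε/2) : ℝ) := by exact_mod_cast hnpos
      have hNb : (coverNum (Set.univ : Set X) (ε/2) : ℝ) ≤ (2*(1/ε))^d' := by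
        have heq : 1/(ε/2) = 2*(1/ε) := by rw [one_div_div]; ring
        rw [← heq]
        exact h1
      have hu2 : (1:ℝ) ≤ (1/ε)^2 := by nlinarith
      have hLK : ((⌈(4*(D^2+1))/ε^2⌉₊ : ℕ) : ℝ) ≤ K * (1/ε)^2 := by
        have hceil : ((⌈(4*(D^2+1))/ε^2⌉₊ : ℕ) : ℝ) ≤ (4*(D^2+1))/ε^2 + 1 :=
          (Nat.ceil_lt_add_one (by positivity)).le
        have heq : (4*(D^2+1))/ε^2 = 4*(D^2+1) * (1/ε)^2 := by
          rw [div_pow, one_pow, mul_one_div]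
        rw [hK]
        nlinarith [mul_le_mul_of_nonneg_left hu2 (show (0:ℝ) ≤ 4*(D^2+1) by positivity), heq]
      have hcov := wasserstein_cover (X := X) hε0
      have hchain := chain (u := 1/ε) hd'0 hδ hK1 hu1 hn1 hNb hLK hcov
      rw [← hC₀, ← ht'def] at hchain
      exact hchain.trans (const_rpow_le (by rw [hC₀]; positivity) hε0 rfl ht't.le h3)
    · have hXe : IsEmpty X := not_nonempty_iff.1 hX
      have hempty : IsEmpty (ProbabilityMeasure X) := by
        constructor
        intro μ
        have h1 : (μ : Measure X) Set.univ = 1 := measure_univ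
        rw [Set.univ_eq_empty_iff.2 hXe, measure_empty] at h1
        exact zero_ne_one h1
      have hzero : ∀ ε : ℝ, coverNumW X 2 ε = 0 := fun ε =>
        Nat.sInf_eq_zero.2 (Or.inl ⟨∅, rfl, fun μ => (hempty.false μ).elim⟩)
      refine ⟨1, one_pos, ?_⟩
      filter_upwards [self_mem_nhdsWithin] with ε hε
      rw [hzero ε, one_mul]
      simp only [Nat.cast_zero, Real.log_zero]
      have hε0 : (0:ℝ) < ε := Set.mem_Ioi.1 hε
      positivity
  refine ⟨part1, ?_⟩
  refine _root_.le_of_forall_pos_le_add ?_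
  intro η hη
  refine csInf_le ⟨0, fun s hs => hs.1.le⟩ ?_
  refine ⟨by linarith, ?_⟩
  set s := d + η with hs
  obtain ⟨C, hC, hev⟩ := part1 ((d + s)/2) (by rw [hs]; linarith)
  set tt := (d + s)/2 with htt
  have htts : tt < s := by rw [htt, hs]; linarith
  have hle : ∀ᶠ ε in 𝓝[>] (0:ℝ),
      (coverNumW X 2 ε : ℝ≥0∞) * ENNReal.ofReal (Real.exp (-(1 / ε) ^ s)) ≤ 1 := by
    filter_upwards [hev, eventually_rpow_small C (s - tt) (by linarith),
      self_mem_nhdsWithin, eventually_le_one] with ε h1 h4 hε hε1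
    have hε0 : (0:ℝ) < ε := Set.mem_Ioi.1 hε
    have hu1 : (1:ℝ) ≤ 1/ε := one_le_one_div hε0 hε1
    have hlog : Real.log (coverNumW X 2 ε) ≤ (1/ε)^s := by
      refine h1.trans ?_
      have := const_rpow_le (C₀ := C) (t' := tt) (t := s) hC hε0 rfl htts.le h4
      linarith
    have hNle : ((coverNumW X 2 ε : ℕ) : ℝ) ≤ Real.exp ((1/ε)^s) := by
      rcases Nat.eq_zero_or_pos (coverNumW X 2 ε) with h0 | hpos
      · rw [h0]; simp [Real.exp_nonneg]
      · calc ((coverNumW X 2 ε : ℕ) : ℝ) = Real.exp (Real.log (coverNumW X 2 ε)) :=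
              (Real.exp_log (by exact_mod_cast hpos)).symm
          _ ≤ Real.exp ((1/ε)^s) := Real.exp_le_exp.2 hlog
    have hreal : ((coverNumW X 2 ε : ℕ) : ℝ) * Real.exp (-(1/ε)^s) ≤ 1 := by
      have hm := mul_le_mul_of_nonneg_right hNle (Real.exp_nonneg (-(1/ε)^s))
      rwa [← Real.exp_add, add_neg_cancel, Real.exp_zero] at hm
    calc (coverNumW X 2 ε : ℝ≥0∞) * ENNReal.ofReal (Real.exp (-(1 / ε) ^ s))
        = ENNReal.ofReal (((coverNumW X 2 ε : ℕ) : ℝ) * Real.exp (-(1/ε)^s)) := by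
          rw [ENNReal.ofReal_mul (by positivity), ENNReal.ofReal_natCast]
      _ ≤ ENNReal.ofReal 1 := ENNReal.ofReal_le_ofReal hreal
      _ = 1 := ENNReal.ofReal_one
  calc Filter.liminf (fun ε : ℝ =>
          (coverNumW X 2 ε : ℝ≥0∞) * ENNReal.ofReal (Real.exp (-(1 / ε) ^ s)))
        (𝓝[>] (0:ℝ))
      ≤ Filter.liminf (fun _ : ℝ => (1 : ℝ≥0∞)) (𝓝[>] (0:ℝ)) := Filter.liminf_le_liminf hle
    _ = 1 := Filter.liminf_const 1
    _ < ⊤ := one_lt_top
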